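/- For all integers n, t and l with 0 < t < n − 2 and n/(n−t−2) ≤ l ≤ n, the single-exclusion number satisfies S(n,t) ≤ (1/l)·binom(n,t) + l·[ binom(n−⌊n/l⌋, t) − binom(n−⌊n/l⌋−⌈n/l⌉, t−⌈n/l⌉) ], where binom(a,b) denotes the binomial coefficient (equal to 0 when b < 0 or b > a). -/

import Mathlib

/-- An `(n,t)`-single-exclusion system: a collection of `t`-subsets (blocks) of an
`n`-set such that every subset `X` with `1 ≤ |X| ≤ t+1` has a block containing all
but exactly one element of `X`. -/
def IsSESystem (n t : ℕ) (S : Finset (Finset (Fin n))) : Prop :=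
  (∀ B ∈ S, B.card = t) ∧
  ∀ X : Finset (Fin n), 1 ≤ X.card → X.card ≤ t + 1 → ∃ B ∈ S, (X \ B).card = 1

/-- The `(n,t)`-single-exclusion number `S(n,t)`: the least number of blocks in an
`(n,t)`-single-exclusion system. -/
noncomputable def SENumber (n t : ℕ) : ℕ :=
  sInf {m : ℕ | ∃ S : Finset (Finset (Fin n)), IsSESystem n t S ∧ S.card = m}
/-- Binomial coefficient with integer arguments, equal to `0` when either argument is
negative (in particular when the lower argument is negative), and to `Nat.choose`
otherwise (hence `0` when the lower argument exceeds the upper one). -/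
def binom (a b : ℤ) : ℕ := if 0 ≤ a ∧ 0 ≤ b then a.toNat.choose b.toNat else 0

open Finset

lemma card_filter_superset {α : Type*} [DecidableEq α] (M F : Finset α) (hFM : F ⊆ M)
    {t : ℕ} (hF : F.card ≤ t) :
    ((M.powersetCard t).filter (fun B => F ⊆ B)).card = (M.card - F.card).choose (t - F.card) := by
  rw [← Finset.card_sdiff_of_subset hFM, ← Finset.card_powersetCard (t - F.card) (M \ F)]
  refine Finset.card_nbij' (fun B => B \ F) (fun S => S ∪ F) ?_ ?_ ?_ ?_
  · intro B hB
    simp only [Finset.mem_coe, mem_filter, mem_powersetCard] at hB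
    obtain ⟨⟨hBM, hBt⟩, hFB⟩ := hB
    simp only [Finset.mem_coe, mem_powersetCard]
    exact ⟨sdiff_subset_sdiff hBM Subset.rfl, by rw [card_sdiff_of_subset hFB, hBt]⟩
  · intro S hS
    simp only [Finset.mem_coe, mem_powersetCard] at hS
    obtain ⟨hSM, hSc⟩ := hS
    have hSF : Disjoint S F := disjoint_of_subset_left hSM sdiff_disjoint
    simp only [Finset.mem_coe, mem_filter, mem_powersetCard]
    refine ⟨⟨union_subset (hSM.trans sdiff_subset) hFM, ?_⟩, subset_union_right⟩
    rw [card_union_of_disjoint hSF, hSc]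
    omega
  · intro B hB
    simp only [Finset.mem_coe, mem_filter, mem_powersetCard] at hB
    simp only []
    rw [sdiff_union_of_subset hB.2]
  · intro S hS
    simp only [Finset.mem_coe, mem_powersetCard] at hS
    have hd : Disjoint S F := disjoint_of_subset_left hS.1 sdiff_disjoint
    simp only []
    rw [union_sdiff_cancel_right hd]

lemma ceil_div_le_of_le_mul {n l m : ℕ} (hl : 0 < l) (h : n ≤ l * m) : (n + l - 1) / l ≤ m := by
  have h1 : n + l - 1 ≤ l * m + (l - 1) := by omega
  calc (n + l - 1) / l ≤ (l * m + (l - 1)) / l := Nat.div_le_div_right h1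
    _ = m + (l - 1) / l := by rw [Nat.mul_add_div hl]
    _ = m := by rw [Nat.div_eq_of_lt (by omega)]; omega

lemma ceil_div_eq (n l : ℕ) (hl : 0 < l) :
    (n + l - 1) / l = n / l + if n % l = 0 then 0 else 1 := by
  have hdm : l * (n / l) + n % l = n := Nat.div_add_mod n l
  have hmod : n % l < l := Nat.mod_lt n hl
  rcases Nat.eq_zero_or_pos (n % l) with h | h
  · have e : n + l - 1 = l * (n / l) + (l - 1) := by omega
    rw [e, Nat.mul_add_div hl, Nat.div_eq_of_lt (show l - 1 < l by omega), if_pos h]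
  · have e : n + l - 1 = l * (n / l + 1) + (n % l - 1) := by
      have e2 : l * (n / l + 1) = l * (n / l) + l := by ring
      omega
    rw [e, Nat.mul_add_div hl, Nat.div_eq_of_lt (show n % l - 1 < l by omega),
      if_neg (by omega)]

lemma aux_block {α : Type*} [DecidableEq α] (X S : Finset α) (x : α) (hxX : x ∈ X)
    (hdisj : ∀ a ∈ S, a ∉ X) {t : ℕ} (h1 : 1 ≤ X.card) (h2 : X.card ≤ t + 1)
    (hS : S.card = t + 1 - X.card) :
    ((X \ {x}) ∪ S).card = t ∧ X \ ((X \ {x}) ∪ S) = {x} := by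
  have hd : Disjoint (X \ {x}) S := by
    rw [disjoint_right]; intro a ha h; exact hdisj a ha (mem_sdiff.mp h).1
  constructor
  · rw [card_union_of_disjoint hd, card_sdiff_of_subset (singleton_subset_iff.mpr hxX), card_singleton, hS]
    omega
  · ext y
    simp only [mem_sdiff, mem_union, mem_singleton]
    constructor
    · rintro ⟨hyX, hy⟩
      by_contra hne
      exact hy (Or.inl ⟨hyX, hne⟩)
    · rintro rfl
      exact ⟨hxX, by rintro (⟨-, h⟩ | h); exacts [h rfl, hdisj _ h hxX]⟩

theorem stmt3 (n t l : ℕ) (ht : 0 < t) (htn : t + 2 < n)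
    (hl1 : (n : ℝ) / ((n : ℝ) - (t : ℝ) - 2) ≤ (l : ℝ)) (hl2 : l ≤ n) :
    (SENumber n t : ℝ) ≤ (1 / (l : ℝ)) * (n.choose t : ℝ) +
      (l : ℝ) * ((binom ((n : ℤ) - (n / l : ℕ)) (t : ℤ) : ℝ) -
        (binom ((n : ℤ) - (n / l : ℕ) - ((n + l - 1) / l : ℕ))
          ((t : ℤ) - ((n + l - 1) / l : ℕ)) : ℝ)) := by
  classical
  -- basic numeric facts
  have hsubpos : (0 : ℝ) < (n : ℝ) - (t : ℝ) - 2 := by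
    have : (t : ℝ) + 2 < (n : ℝ) := by exact_mod_cast htn
    linarith
  have hcast : ((n - t - 2 : ℕ) : ℝ) = (n : ℝ) - (t : ℝ) - 2 := by
    rw [Nat.cast_sub (show 2 ≤ n - t by omega), Nat.cast_sub (show t ≤ n by omega)]
    push_cast; ring
  have hkey : n ≤ l * (n - t - 2) := by
    have h1 : (n : ℝ) ≤ (l : ℝ) * ((n : ℝ) - (t : ℝ) - 2) := by
      rw [div_le_iff₀ hsubpos] at hl1; linarith
    have h2 : (n : ℝ) ≤ ((l * (n - t - 2) : ℕ) : ℝ) := by push_cast [hcast]; linarith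
    exact_mod_cast h2
  have hlpos : 0 < l := by
    rcases Nat.eq_zero_or_pos l with h | h
    · subst h; simp at hkey; omega
    · exact h
  have hl2' : 2 ≤ l := by
    by_contra h
    have hl1' : l = 1 := by omega
    rw [hl1', one_mul] at hkey; omega
  haveI : NeZero l := ⟨by omega⟩
  have hg'le : (n + l - 1) / l ≤ n - t - 2 := ceil_div_le_of_le_mul hlpos hkey
  have hgg' : n / l ≤ (n + l - 1) / l := Nat.div_le_div_right (by omega)
  have hgn : n / l ≤ n := Nat.div_le_self n l
  have hgg'n : n / l + (n + l - 1) / l ≤ n := by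
    have h2 : n / l ≤ n / 2 := Nat.div_le_div_left hl2' (by norm_num)
    have h3 : (n + l - 1) / l ≤ (n + 1) / 2 := by
      refine ceil_div_le_of_le_mul hlpos ?_
      calc n ≤ 2 * ((n + 1) / 2) := by omega
        _ ≤ l * ((n + 1) / 2) := Nat.mul_le_mul_right _ hl2'
    omega
  -- the residue classes
  set G : ℕ → Finset (Fin n) := fun j => univ.filter (fun x => x.val % l = j) with hGdef
  have hGcard : ∀ j, j < l → (G j).card = n / l + if j < n % l then 1 else 0 := by
    intro j hj
    have e1 : (G j).card = ((range n).filter (fun k => k % l = j)).card := by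
      refine Finset.card_nbij (fun x => x.val) ?_ ?_ ?_
      · intro a ha
        simp only [hGdef, Finset.mem_coe, mem_filter, mem_univ, true_and] at ha
        simp only [Finset.mem_coe, mem_filter, mem_range]
        exact ⟨a.isLt, ha⟩
      · exact fun a _ b _ hab => Fin.val_injective hab
      · intro k hk
        simp only [coe_filter, Set.mem_setOf_eq, mem_range] at hk
        exact ⟨⟨k, hk.1⟩, by simp [hGdef, hk.2], rfl⟩
    have e2 : ((range n).filter (fun k => k % l = j))
        = ((range n).filter (fun k => k ≡ j [MOD l])) := by
      apply Finset.filter_congr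
      intro k _
      simp only [Nat.ModEq, Nat.mod_eq_of_lt hj]
    rw [e1, e2, ← Nat.count_eq_card_filter_range, Nat.count_modEq_card n hlpos j,
      Nat.mod_eq_of_lt hj]
  have hg'eq : (n + l - 1) / l = n / l + if n % l = 0 then 0 else 1 :=
    ceil_div_eq n l hlpos
  have hGub : ∀ j, j < l → (G j).card ≤ (n + l - 1) / l := by
    intro j hj
    rw [hGcard j hj, hg'eq]
    rcases Nat.eq_zero_or_pos (n % l) with h | h
    · simp [h]
    · rw [if_neg (by omega : ¬ n % l = 0)]
      split <;> omega
  have hGlb : ∀ j, j < l → n / l ≤ (G j).card := by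
    intro j hj; rw [hGcard j hj]; omega
  -- the fibers of the residue-sum map
  set fib : ZMod l → Finset (Finset (Fin n)) := fun c =>
    (Finset.powersetCard t (univ : Finset (Fin n))).filter
      (fun B => (∑ x ∈ B, ((x.val : ZMod l))) = c) with hfibdef
  obtain ⟨c, -, hcmin⟩ := Finset.exists_min_image (univ : Finset (ZMod l))
    (fun c => (fib c).card) ⟨0, mem_univ 0⟩
  have hfib_sum : ∑ c' : ZMod l, (fib c').card = n.choose t := by
    have h1 : (Finset.powersetCard t (univ : Finset (Fin n))).card
        = ∑ c' : ZMod l, (fib c').card :=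
      Finset.card_eq_sum_card_fiberwise (fun B _ => mem_univ _)
    rw [← h1, Finset.card_powersetCard, Finset.card_univ, Fintype.card_fin]
  have hF0 : l * (fib c).card ≤ n.choose t := by
    calc l * (fib c).card = ∑ _c' : ZMod l, (fib c).card := by
          rw [Finset.sum_const, Finset.card_univ, ZMod.card, smul_eq_mul]
      _ ≤ ∑ c' : ZMod l, (fib c').card :=
          Finset.sum_le_sum (fun i _ => hcmin i (mem_univ i))
      _ = n.choose t := hfib_sum
  -- the repair families
  set F1 : ℕ → Finset (Finset (Fin n)) := fun j =>
    (Finset.powersetCard t (univ : Finset (Fin n))).filter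
      (fun B => (∀ x ∈ B, x.val % l ≠ j) ∧ ¬ (G ((j + 1) % l) ⊆ B)) with hF1def
  set FF : Finset (Finset (Fin n)) := fib c ∪ (Finset.range l).biUnion F1 with hFFdef
  -- every block has size t
  have hsize : ∀ B ∈ FF, B.card = t := by
    intro B hB
    rw [hFFdef, mem_union] at hB
    rcases hB with hB | hB
    · rw [hfibdef, mem_filter, mem_powersetCard] at hB
      exact hB.1.2
    · rw [mem_biUnion] at hB
      obtain ⟨j, -, hB⟩ := hB
      rw [hF1def, mem_filter, mem_powersetCard] at hB
      exact hB.1.2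
  -- the covering property
  have hcover : ∀ X : Finset (Fin n), 1 ≤ X.card → X.card ≤ t + 1 →
      ∃ B ∈ FF, (X \ B).card = 1 := by
    intro X hX1 hX2
    by_cases hall : ∀ j, j < l → ∃ x ∈ X, x.val % l = j
    · -- X meets every residue class
      obtain ⟨S, hSsub, hScard⟩ := Finset.exists_subset_card_eq
        (show t + 1 - X.card ≤ ((univ : Finset (Fin n)) \ X).card by
          rw [card_sdiff_of_subset (subset_univ X), card_univ, Fintype.card_fin]; omega)
      have hSX : ∀ a ∈ S, a ∉ X := by
        intro a ha
        exact (mem_sdiff.mp (hSsub ha)).2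
      set r : ZMod l := (∑ x ∈ X, ((x.val : ZMod l))) + (∑ x ∈ S, ((x.val : ZMod l))) - c
        with hrdef
      obtain ⟨x, hxX, hxr⟩ := hall r.val (ZMod.val_lt r)
      have hxcast : ((x.val : ZMod l)) = r := by
        rw [← ZMod.natCast_mod x.val l, hxr]
        exact ZMod.natCast_rightInverse r
      obtain ⟨hcardB, hXB⟩ := aux_block X S x hxX hSX hX1 hX2 hScard
      refine ⟨(X \ {x}) ∪ S, ?_, by rw [hXB, card_singleton]⟩
      apply mem_union_left
      rw [hfibdef, mem_filter, mem_powersetCard]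
      refine ⟨⟨subset_univ _, hcardB⟩, ?_⟩
      have hd : Disjoint (X \ {x}) S := by
        rw [disjoint_right]; intro a ha h; exact hSX a ha (mem_sdiff.mp h).1
      rw [Finset.sum_union hd,
        Finset.sum_sdiff_eq_sub (singleton_subset_iff.mpr hxX), Finset.sum_singleton,
        hxcast, hrdef]
      ring
    · -- X misses some residue class
      push_neg at hall
      obtain ⟨j, hjl, hjX⟩ := hall
      have hj'l : (j + 1) % l < l := Nat.mod_lt _ hlpos
      have hj'ne : (j + 1) % l ≠ j := by
        rcases Nat.lt_or_ge (j + 1) l with h | h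
        · rw [Nat.mod_eq_of_lt h]; omega
        · have hjl1 : j + 1 = l := by omega
          rw [hjl1, Nat.mod_self]; omega
      have hyG0 : (⟨(j + 1) % l, lt_of_lt_of_le hj'l hl2⟩ : Fin n) ∈ G ((j + 1) % l) := by
        simp only [hGdef, mem_filter, mem_univ, true_and]
        exact Nat.mod_eq_of_lt hj'l
      have hexy : ∃ x y : Fin n, x ∈ X ∧ y ∈ G ((j + 1) % l) ∧ y ∉ X \ {x} := by
        by_cases hxy : (X ∩ G ((j + 1) % l)).Nonempty
        · obtain ⟨x, hx⟩ := hxy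
          rw [mem_inter] at hx
          exact ⟨x, x, hx.1, hx.2, by simp⟩
        · obtain ⟨x, hxX⟩ := Finset.card_pos.mp (show 0 < X.card by omega)
          refine ⟨x, ⟨(j + 1) % l, lt_of_lt_of_le hj'l hl2⟩, hxX, hyG0, ?_⟩
          intro h
          exact hxy ⟨_, mem_inter.mpr ⟨(mem_sdiff.mp h).1, hyG0⟩⟩
      obtain ⟨x, y, hxX, hyG, hyXx⟩ := hexy
      have hPcard : t + 1 - X.card ≤ ((univ : Finset (Fin n)) \ ((G j ∪ X) ∪ {y})).card := by
        have h1 : ((G j ∪ X) ∪ {y}).card ≤ (G j).card + X.card + 1 := by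
          calc ((G j ∪ X) ∪ {y}).card ≤ (G j ∪ X).card + ({y} : Finset (Fin n)).card :=
                card_union_le _ _
            _ ≤ (G j).card + X.card + 1 := by
                have := card_union_le (G j) X
                rw [card_singleton]; omega
        have h2 : (G j).card ≤ (n + l - 1) / l := hGub j hjl
        rw [card_sdiff_of_subset (subset_univ _), card_univ, Fintype.card_fin]
        have h3 : ((G j ∪ X) ∪ {y}).card ≤ (n - t - 2) + X.card + 1 := by omega
        omega
      obtain ⟨S, hSsub, hScard⟩ := Finset.exists_subset_card_eq hPcard
      have hSfact : ∀ a ∈ S, a ∉ G j ∧ a ∉ X ∧ a ≠ y := by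
        intro a ha
        have h := hSsub ha
        simp only [mem_sdiff, mem_union, mem_singleton, mem_univ, true_and, not_or] at h
        exact ⟨h.1.1, h.1.2, h.2⟩
      have hSX : ∀ a ∈ S, a ∉ X := fun a ha => (hSfact a ha).2.1
      obtain ⟨hcardB, hXB⟩ := aux_block X S x hxX hSX hX1 hX2 hScard
      refine ⟨(X \ {x}) ∪ S, ?_, by rw [hXB, card_singleton]⟩
      apply mem_union_right
      rw [mem_biUnion]
      refine ⟨j, mem_range.mpr hjl, ?_⟩
      rw [hF1def, mem_filter, mem_powersetCard]
      refine ⟨⟨subset_univ _, hcardB⟩, ?_, ?_⟩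
      · intro a ha
        rw [mem_union] at ha
        rcases ha with ha | ha
        · exact hjX a (mem_sdiff.mp ha).1
        · intro hmod
          exact (hSfact a ha).1 (by simp only [hGdef, mem_filter, mem_univ, true_and]; exact hmod)
      · intro hsub
        have hyB := hsub hyG
        rw [mem_union] at hyB
        rcases hyB with h | h
        · exact hyXx h
        · exact (hSfact y h).2.2 rfl
  -- SENumber is at most the size of our system
  have hSE : SENumber n t ≤ FF.card := by
    unfold SENumber
    exact Nat.sInf_le ⟨FF, ⟨hsize, hcover⟩, rfl⟩
  -- counting the repair families
  set N1 : ℕ := (n - n / l).choose t with hN1def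
  set N2 : ℕ := if (n + l - 1) / l ≤ t then
    (n - n / l - (n + l - 1) / l).choose (t - (n + l - 1) / l) else 0 with hN2def
  have hF1count : ∀ j, j < l → (F1 j).card + N2 ≤ N1 := by
    intro j hjl
    have hj'l : (j + 1) % l < l := Nat.mod_lt _ hlpos
    have hj'ne : (j + 1) % l ≠ j := by
      rcases Nat.lt_or_ge (j + 1) l with h | h
      · rw [Nat.mod_eq_of_lt h]; omega
      · have hjl1 : j + 1 = l := by omega
        rw [hjl1, Nat.mod_self]; omega
    -- build M
    have hMex : ∃ M : Finset (Fin n), (univ \ G j) ⊆ M ∧ M ⊆ univ ∧ M.card = n - n / l := by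
      refine Finset.exists_subsuperset_card_eq (subset_univ _) ?_ ?_
      · rw [card_sdiff_of_subset (subset_univ _), card_univ, Fintype.card_fin]
        have := hGlb j hjl
        omega
      · rw [card_univ, Fintype.card_fin]; exact Nat.sub_le _ _
    obtain ⟨M, hM1, -, hMcard⟩ := hMex
    have hGj'M : G ((j + 1) % l) ⊆ M := by
      intro a ha
      apply hM1
      rw [mem_sdiff]
      refine ⟨mem_univ _, ?_⟩
      simp only [hGdef, mem_filter, mem_univ, true_and] at ha ⊢
      rw [ha]
      exact hj'ne
    have hFex : ∃ Fb : Finset (Fin n), G ((j + 1) % l) ⊆ Fb ∧ Fb ⊆ M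
        ∧ Fb.card = (n + l - 1) / l := by
      refine Finset.exists_subsuperset_card_eq hGj'M (hGub _ hj'l) ?_
      rw [hMcard]; omega
    obtain ⟨Fb, hFb1, hFb2, hFbcard⟩ := hFex
    have hsubset : F1 j ⊆ (M.powersetCard t).filter (fun B => ¬ Fb ⊆ B) := by
      intro B hB
      rw [hF1def, mem_filter, mem_powersetCard] at hB
      obtain ⟨⟨-, hBt⟩, hBG, hBG'⟩ := hB
      rw [mem_filter, mem_powersetCard]
      refine ⟨⟨?_, hBt⟩, ?_⟩
      · intro a haB
        apply hM1
        rw [mem_sdiff]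
        refine ⟨mem_univ _, ?_⟩
        simp only [hGdef, mem_filter, mem_univ, true_and]
        exact hBG a haB
      · intro hFbB
        exact hBG' (hFb1.trans hFbB)
    have hTsplit : ((M.powersetCard t).filter (fun B => Fb ⊆ B)).card
        + ((M.powersetCard t).filter (fun B => ¬ Fb ⊆ B)).card = N1 := by
      rw [Finset.card_filter_add_card_filter_not, Finset.card_powersetCard, hMcard]
    have hcontain : ((M.powersetCard t).filter (fun B => Fb ⊆ B)).card = N2 := by
      by_cases h : (n + l - 1) / l ≤ t
      · rw [card_filter_superset M Fb hFb2 (by rw [hFbcard]; exact h), hMcard, hFbcard,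
          hN2def, if_pos h]
      · rw [hN2def, if_neg h]
        rw [Finset.card_eq_zero]
        rw [Finset.filter_eq_empty_iff]
        intro B hB
        rw [mem_powersetCard] at hB
        intro hFbB
        have := Finset.card_le_card hFbB
        rw [hFbcard, hB.2] at this
        omega
    have := Finset.card_le_card hsubset
    omega
  -- assemble the real inequality
  have hFFle : FF.card ≤ (fib c).card + ∑ j ∈ Finset.range l, (F1 j).card := by
    calc FF.card ≤ (fib c).card + ((Finset.range l).biUnion F1).card := card_union_le _ _
      _ ≤ (fib c).card + ∑ j ∈ Finset.range l, (F1 j).card := by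
          have := Finset.card_biUnion_le (s := Finset.range l) (t := F1)
          omega
  have hlR : (0 : ℝ) < (l : ℝ) := by exact_mod_cast hlpos
  have hfibR : ((fib c).card : ℝ) ≤ (n.choose t : ℝ) / l := by
    rw [le_div_iff₀ hlR]
    have : ((l * (fib c).card : ℕ) : ℝ) ≤ ((n.choose t : ℕ) : ℝ) := by exact_mod_cast hF0
    push_cast at this
    linarith
  have hF1R : ∀ j ∈ Finset.range l, ((F1 j).card : ℝ) ≤ (N1 : ℝ) - (N2 : ℝ) := by
    intro j hj
    rw [mem_range] at hj
    have h := hF1count j hj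
    have : (((F1 j).card + N2 : ℕ) : ℝ) ≤ ((N1 : ℕ) : ℝ) := by exact_mod_cast h
    push_cast at this
    linarith
  have hsumR : ((∑ j ∈ Finset.range l, (F1 j).card : ℕ) : ℝ) ≤ (l : ℝ) * ((N1 : ℝ) - (N2 : ℝ)) := by
    push_cast
    calc ∑ j ∈ Finset.range l, ((F1 j).card : ℝ)
        ≤ ∑ _j ∈ Finset.range l, ((N1 : ℝ) - (N2 : ℝ)) := Finset.sum_le_sum hF1R
      _ = (l : ℝ) * ((N1 : ℝ) - (N2 : ℝ)) := by rw [Finset.sum_const, card_range, nsmul_eq_mul]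
  -- identify the binomial coefficients
  have hbinom1 : (binom ((n : ℤ) - (n / l : ℕ)) (t : ℤ) : ℝ) = (N1 : ℝ) := by
    have : binom ((n : ℤ) - (n / l : ℕ)) (t : ℤ) = N1 := by
      rw [binom, if_pos ⟨by omega, by omega⟩, hN1def]
      congr 1 <;> omega
    rw [this]
  have hbinom2 : (binom ((n : ℤ) - (n / l : ℕ) - ((n + l - 1) / l : ℕ))
      ((t : ℤ) - ((n + l - 1) / l : ℕ)) : ℝ) = (N2 : ℝ) := by
    have : binom ((n : ℤ) - (n / l : ℕ) - ((n + l - 1) / l : ℕ))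
        ((t : ℤ) - ((n + l - 1) / l : ℕ)) = N2 := by
      by_cases h : (n + l - 1) / l ≤ t
      · rw [binom, if_pos ⟨by omega, by omega⟩, hN2def, if_pos h]
        congr 1 <;> omega
      · rw [binom, if_neg (by omega), hN2def, if_neg h]
    rw [this]
  rw [hbinom1, hbinom2]
  have hchain : (SENumber n t : ℝ) ≤ ((fib c).card : ℝ) + ((∑ j ∈ Finset.range l, (F1 j).card : ℕ) : ℝ) := by
    have h1 : (SENumber n t : ℝ) ≤ (FF.card : ℝ) := by exact_mod_cast hSE
    have h2 : (FF.card : ℝ) ≤ (((fib c).card + ∑ j ∈ Finset.range l, (F1 j).card : ℕ) : ℝ) := by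
      exact_mod_cast hFFle
    push_cast at h2
    push_cast
    linarith
  have := hfibR
  have := hsumR
  rw [one_div]
  calc (SENumber n t : ℝ) ≤ ((fib c).card : ℝ) + ((∑ j ∈ Finset.range l, (F1 j).card : ℕ) : ℝ) :=
        hchain
    _ ≤ (n.choose t : ℝ) / l + (l : ℝ) * ((N1 : ℝ) - (N2 : ℝ)) := by linarith
    _ = (l : ℝ)⁻¹ * (n.choose t : ℝ) + (l : ℝ) * ((N1 : ℝ) - (N2 : ℝ)) := by
        rw [div_eq_inv_mul]
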